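/- Let σ > 0, σ_Δ > 0, μ_Δ ∈ ℝ, η = σ_Δ²/(σ_Δ² + 2σ²) and ξ = |μ_Δ|/(√2·σ). If D is a random variable with density φ(d; 0, √2·σ) (the null model M₀), then the expectation of ln(BF₁₀)(D) = (1/2)( ln(1−η) − (1−η)((D − μ_Δ)/(√2σ))² + (D/(√2σ))² ) equals (1/2)·( ln(1 − η) + η − (1 − η)·ξ² ). -/

import Mathlib

open MeasureTheory Real

lemma aux_int1 (b : ℝ) : ∫ x : ℝ, x * Real.exp (-b * x ^ 2) = 0 := by
  simp only [neg_mul]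
  have h := MeasureTheory.integral_neg_eq_self (fun x : ℝ => x * Real.exp (-(b * x ^ 2))) volume
  simp only [neg_sq, neg_mul] at h
  rw [integral_neg] at h
  linarith

lemma aux_int2 {b : ℝ} (hb : 0 < b) :
    ∫ x : ℝ, x ^ 2 * Real.exp (-b * x ^ 2) = Real.sqrt (π / b) / (2 * b) := by
  have habs : ∫ x : ℝ, x ^ 2 * Real.exp (-b * x ^ 2)
      = 2 * ∫ x in Set.Ioi (0:ℝ), x ^ 2 * Real.exp (-b * x ^ 2) := by
    rw [← integral_comp_abs (f := fun x => x ^ 2 * Real.exp (-b * x ^ 2))]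
    congr 1 with x
    rw [sq_abs]
  have hval : ∫ x in Set.Ioi (0:ℝ), x ^ 2 * Real.exp (-b * x ^ 2)
      = b ^ (-(2 + 1) / 2 : ℝ) * (1 / 2) * Real.Gamma ((2 + 1) / 2) := by
    rw [← integral_rpow_mul_exp_neg_mul_rpow (by norm_num : (0:ℝ) < 2) (by norm_num : (-1:ℝ) < 2) hb]
    refine setIntegral_congr_fun measurableSet_Ioi (fun x hx => ?_)
    rw [show ((2:ℝ)) = ((2:ℕ):ℝ) by norm_num, Real.rpow_natCast]
  have hGamma : Real.Gamma ((2 + 1) / 2) = Real.sqrt π / 2 := by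
    rw [show ((2:ℝ) + 1) / 2 = 1 / 2 + 1 by norm_num, Real.Gamma_add_one (by norm_num),
      Real.Gamma_one_half_eq]
    ring
  have h32 : b ^ (-(2 + 1) / 2 : ℝ) = (Real.sqrt b)⁻¹ * b⁻¹ := by
    rw [show (-(2 + 1) / 2 : ℝ) = -(1/2) + (-1) by norm_num, Real.rpow_add hb,
      Real.rpow_neg hb.le, Real.rpow_neg hb.le, Real.rpow_one, ← Real.sqrt_eq_rpow]
  have hsb : Real.sqrt b ≠ 0 := ne_of_gt (Real.sqrt_pos.mpr hb)
  rw [habs, hval, hGamma, h32, Real.sqrt_div' π hb.le]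
  field_simp

lemma aux_int2' {b : ℝ} (hb : 0 < b) :
    Integrable (fun x : ℝ => x ^ 2 * Real.exp (-b * x ^ 2)) := by
  have h := integrable_rpow_mul_exp_neg_mul_sq hb (by norm_num : (-1:ℝ) < 2)
  simp only [show ((2:ℝ)) = ((2:ℕ):ℝ) by norm_num, Real.rpow_natCast] at h
  exact h

/-- The normal probability density function with mean `a` and standard deviation `b`. -/
noncomputable def gaussPdf (x a b : ℝ) : ℝ :=
  (2 * Real.pi * b ^ 2) ^ (-(1 : ℝ) / 2) * Real.exp (-(x - a) ^ 2 / (2 * b ^ 2))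

theorem stmt_5 (σ σΔ : ℝ) (hσ : 0 < σ) (hσΔ : 0 < σΔ) (μΔ : ℝ)
    (η : ℝ) (hη : η = σΔ ^ 2 / (σΔ ^ 2 + 2 * σ ^ 2))
    (ξ : ℝ) (hξ : ξ = |μΔ| / (Real.sqrt 2 * σ))
    (lnBF : ℝ → ℝ)
    (hlnBF : ∀ d, lnBF d = 1 / 2 * (Real.log (1 - η)
        - (1 - η) * ((d - μΔ) / (Real.sqrt 2 * σ)) ^ 2
        + (d / (Real.sqrt 2 * σ)) ^ 2)) :
    (∫ d : ℝ, lnBF d * gaussPdf d 0 (Real.sqrt 2 * σ))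
      = 1 / 2 * (Real.log (1 - η) + η - (1 - η) * ξ ^ 2) := by
  set c : ℝ := Real.sqrt 2 * σ with hc
  have hc0 : 0 < c := mul_pos (Real.sqrt_pos.mpr (by norm_num)) hσ
  set b : ℝ := (2 * c ^ 2)⁻¹ with hbdef
  have hb : 0 < b := by positivity
  set A : ℝ := (2 * Real.pi * c ^ 2) ^ (-(1 : ℝ) / 2) with hA
  set k0 : ℝ := 1 / 2 * Real.log (1 - η) - (1 - η) * μΔ ^ 2 / (2 * c ^ 2) with hk0
  set k1 : ℝ := (1 - η) * μΔ / c ^ 2 with hk1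
  set k2 : ℝ := η / (2 * c ^ 2) with hk2
  have hpt : ∀ d : ℝ, lnBF d * gaussPdf d 0 c
      = A * k0 * Real.exp (-b * d ^ 2) + A * k1 * (d * Real.exp (-b * d ^ 2))
        + A * k2 * (d ^ 2 * Real.exp (-b * d ^ 2)) := by
    intro d
    have hexp : Real.exp (-(d - 0) ^ 2 / (2 * c ^ 2)) = Real.exp (-b * d ^ 2) := by
      congr 1
      rw [hbdef]
      field_simp
      ring
    rw [hlnBF d, gaussPdf, hexp]
    have : (1 / 2 * (Real.log (1 - η) - (1 - η) * ((d - μΔ) / c) ^ 2 + (d / c) ^ 2))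
        = k0 + k1 * d + k2 * d ^ 2 := by
      rw [hk0, hk1, hk2]
      field_simp
      ring
    rw [this]
    ring
  rw [integral_congr_ae (Filter.Eventually.of_forall hpt)]
  have ig0 : Integrable (fun d : ℝ => Real.exp (-b * d ^ 2)) := integrable_exp_neg_mul_sq hb
  have ig1 : Integrable (fun d : ℝ => d * Real.exp (-b * d ^ 2)) := integrable_mul_exp_neg_mul_sq hb
  have ig2 : Integrable (fun d : ℝ => d ^ 2 * Real.exp (-b * d ^ 2)) := aux_int2' hb
  have ig01 : Integrable (fun d : ℝ => A * k0 * Real.exp (-b * d ^ 2)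
      + A * k1 * (d * Real.exp (-b * d ^ 2))) := (ig0.const_mul _).add (ig1.const_mul _)
  rw [integral_add ig01 (ig2.const_mul _),
    integral_add (ig0.const_mul _) (ig1.const_mul _),
    integral_const_mul, integral_const_mul, integral_const_mul,
    integral_gaussian, aux_int1, aux_int2 hb]
  have hnorm : A * Real.sqrt (π / b) = 1 := by
    have hx : (0:ℝ) < 2 * Real.pi * c ^ 2 := by positivity
    have : π / b = 2 * Real.pi * c ^ 2 := by
      rw [hbdef]
      field_simp
    rw [this, hA, Real.sqrt_eq_rpow, ← Real.rpow_add hx]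
    norm_num
  have h2b : (2 * b)⁻¹ = c ^ 2 := by
    rw [hbdef]
    field_simp
  have key : A * k0 * Real.sqrt (π / b) + A * k1 * 0
      + A * k2 * (Real.sqrt (π / b) / (2 * b)) = k0 + k2 * c ^ 2 := by
    have h1 : Real.sqrt (π / b) / (2 * b) = Real.sqrt (π / b) * c ^ 2 := by
      rw [div_eq_mul_inv, h2b]
    rw [h1]
    calc A * k0 * Real.sqrt (π / b) + A * k1 * 0 + A * k2 * (Real.sqrt (π / b) * c ^ 2)
        = (k0 + k2 * c ^ 2) * (A * Real.sqrt (π / b)) := by ring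
      _ = k0 + k2 * c ^ 2 := by rw [hnorm, mul_one]
  rw [key, hk0, hk2, hξ]
  have habs : |μΔ| ^ 2 = μΔ ^ 2 := sq_abs μΔ
  rw [div_pow, habs]
  field_simp
  ring
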